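/- There is an absolute constant K > 0 such that the following holds. Let T be a positive integer, let z_1,…,z_T ≥ 0, u_1,…,u_T ≥ 0 and h_1,…,h_T, ĥ_1,…,ĥ_T > 0 with h_t ≤ ĥ_t for all t ∈ [T], and let z_max, u_max, ĥ_max denote the maxima of the respective sequences over t ∈ [T]. Suppose (β_t)_{t=1}^T are positive reals satisfying Rule 1: β_t = β_{t−1} + (1/ĥ_t)(2√(z_t/β_t) + u_t/β_t) for all t, with β_0 = 0. Then for every ε ≥ 1/T, F(β_{1:T}, z_{1:T}, u_{1:T}, h_{1:T}) ≤ K · [ min{ (∑_{t=1}^T √(z_t ĥ_t ln(εT)))^{2/3} + (√(z_max ĥ_max)/ε)^{2/3} , (∑_{t=1}^T √(z_t ĥ_max))^{2/3} } + min{ √(∑_{t=1}^T u_t ĥ_t ln(εT)) + √(u_max ĥ_max/ε) , √(∑_{t=1}^T u_t ĥ_max) } ]. -/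

import Mathlib

open Finset

lemma aux_cuberoot_cube {y : ℝ} (hy : 0 ≤ y) : ((y ^ ((1:ℝ)/3)) : ℝ)^3 = y := by
  rw [← Real.rpow_natCast (y ^ ((1:ℝ)/3)) 3, ← Real.rpow_mul hy]
  norm_num

lemma aux_le_cuberoot {x y : ℝ} (hy : 0 ≤ y) (hx : 0 ≤ x) (h : x ≤ y^3) :
    x ^ ((1:ℝ)/3) ≤ y := by
  calc x ^ ((1:ℝ)/3) ≤ (y^3) ^ ((1:ℝ)/3) :=
        Real.rpow_le_rpow hx h (by norm_num)
  _ = y := by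
      rw [← Real.rpow_natCast y 3, ← Real.rpow_mul hy]; norm_num

lemma aux_step_z {a b : ℝ} (hb : 0 ≤ b) (hba : b ≤ a) :
    2*(a - b) ≤ 3 * a^((1:ℝ)/3) * (a^((2:ℝ)/3) - b^((2:ℝ)/3)) := by
  have ha : 0 ≤ a := hb.trans hba
  set p := a^((1:ℝ)/3) with hpdef
  set q := b^((1:ℝ)/3) with hqdef
  have hp : 0 ≤ p := Real.rpow_nonneg ha _
  have hq : 0 ≤ q := Real.rpow_nonneg hb _
  have hpq : q ≤ p := Real.rpow_le_rpow hb hba (by norm_num)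
  have hp3 : p^3 = a := aux_cuberoot_cube ha
  have hq3 : q^3 = b := aux_cuberoot_cube hb
  have h2a : a^((2:ℝ)/3) = p^2 := by
    rw [hpdef, ← Real.rpow_natCast (a ^ ((1:ℝ)/3)) 2, ← Real.rpow_mul ha]; norm_num
  have h2b : b^((2:ℝ)/3) = q^2 := by
    rw [hqdef, ← Real.rpow_natCast (b ^ ((1:ℝ)/3)) 2, ← Real.rpow_mul hb]; norm_num
  rw [h2a, h2b, ← hp3, ← hq3]
  nlinarith [mul_nonneg (sq_nonneg (p - q)) (by linarith : 0 ≤ p + 2*q)]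

lemma aux_step_u {a b : ℝ} (hb : 0 ≤ b) (hba : b ≤ a) :
    a - b ≤ 2 * Real.sqrt a * (Real.sqrt a - Real.sqrt b) := by
  nlinarith [Real.sq_sqrt (hb.trans hba), Real.sq_sqrt hb, Real.sqrt_le_sqrt hba,
    Real.sqrt_nonneg a, Real.sqrt_nonneg b, sq_nonneg (Real.sqrt a - Real.sqrt b)]

set_option linter.unusedSectionVars false


section BetaStruct
variable {T : ℕ} {z u hhat β : ℕ → ℝ}
variable (hz : ∀ t ∈ Icc 1 T, 0 ≤ z t) (hu : ∀ t ∈ Icc 1 T, 0 ≤ u t)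
variable (hhatpos : ∀ t ∈ Icc 1 T, 0 < hhat t) (hβ : ∀ t ∈ Icc 1 T, 0 < β t)
variable (hβ0 : β 0 = 0)
variable (rule : ∀ t ∈ Icc 1 T,
  β t = β (t - 1) + (1 / hhat t) * (2 * Real.sqrt (z t / β t) + u t / β t))

include hu hhatpos hβ rule in
lemma aux_hmul' : ∀ t ∈ Icc 1 T,
    hhat t * (β t - β (t-1)) = 2 * Real.sqrt (z t / β t) + u t / β t := by
  intro t ht
  have h1 := rule t ht
  have h2 : hhat t ≠ 0 := ne_of_gt (hhatpos t ht)
  field_simp at h1 ⊢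
  linarith

include hu hhatpos hβ rule in
lemma aux_delta_nonneg' : ∀ t ∈ Icc 1 T, 0 ≤ β t - β (t-1) := by
  intro t ht
  have h1 := aux_hmul' hu hhatpos hβ rule t ht
  have h2 : 0 ≤ 2 * Real.sqrt (z t / β t) + u t / β t := by
    have := Real.sqrt_nonneg (z t / β t)
    have := div_nonneg (hu t ht) (hβ t ht).le
    linarith
  nlinarith [hhatpos t ht]

include hu hhatpos hβ hβ0 rule in
lemma aux_beta_mono' : ∀ a b : ℕ, a ≤ b → b ≤ T → β a ≤ β b := by
  intro a b
  induction b with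
  | zero => intro hab _; have : a = 0 := Nat.le_zero.mp hab; simp [this]
  | succ n ih =>
    intro hab hbT
    rcases Nat.lt_or_ge a (n+1) with hlt | hge
    · have h1 : β a ≤ β n := by
        rcases Nat.eq_zero_or_pos n with rfl | hn
        · have : a = 0 := by omega
          simp [this]
        · exact ih (by omega) (by omega)
      have hmem : n+1 ∈ Icc 1 T := mem_Icc.mpr ⟨by omega, hbT⟩
      have h2 := aux_delta_nonneg' hu hhatpos hβ rule (n+1) hmem
      simp only [Nat.add_sub_cancel] at h2
      linarith
    · have : a = n+1 := by omega
      simp [this]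

include hβ0 in
lemma aux_telescope' : ∀ t : ℕ, ∑ s ∈ Icc 1 t, (β s - β (s-1)) = β t := by
  intro t
  induction t with
  | zero => simp [hβ0]
  | succ n ih =>
    rw [Finset.sum_Icc_succ_top (by omega : 1 ≤ n+1), ih]
    simp


include hz hu hhatpos hβ hβ0 rule in
lemma aux_zgrowth (B : Finset ℕ) (hB : B ⊆ Icc 1 T) (H : ℝ) (hHpos : 0 < H)
    (hH : ∀ s ∈ B, hhat s ≤ H) :
    ∀ t ∈ Icc 1 T, 2 * (∑ s ∈ B with s ≤ t, Real.sqrt (z s)) ≤ β t * Real.sqrt (β t) * H := by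
  intro t ht
  obtain ⟨ht1, ht2⟩ := mem_Icc.mp ht
  have hβt : 0 < β t := hβ t ht
  have hsβt : 0 < Real.sqrt (β t) := Real.sqrt_pos.mpr hβt
  have key : ∀ s ∈ B.filter (fun s => s ≤ t),
      2 * Real.sqrt (z s) ≤ (β s - β (s-1)) * (H * Real.sqrt (β t)) := by
    intro s hs
    obtain ⟨hsB, hst⟩ := mem_filter.mp hs
    have hsI : s ∈ Icc 1 T := hB hsB
    have hβs : 0 < β s := hβ s hsI
    have hsβs : 0 < Real.sqrt (β s) := Real.sqrt_pos.mpr hβs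
    have hmono : β s ≤ β t := aux_beta_mono' hu hhatpos hβ hβ0 rule s t hst ht2
    have hsle : Real.sqrt (β s) ≤ Real.sqrt (β t) := Real.sqrt_le_sqrt hmono
    have hmul := aux_hmul' hu hhatpos hβ rule s hsI
    have hdiv : Real.sqrt (z s / β s) = Real.sqrt (z s) / Real.sqrt (β s) :=
      Real.sqrt_div (hz s hsI) _
    have husnn : 0 ≤ u s / β s := div_nonneg (hu s hsI) hβs.le
    have h1 : 2 * (Real.sqrt (z s) / Real.sqrt (β s)) ≤ hhat s * (β s - β (s-1)) := by
      rw [hdiv] at hmul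
      linarith [hmul]
    have h2 : 2 * Real.sqrt (z s) ≤ hhat s * (β s - β (s-1)) * Real.sqrt (β s) := by
      have hh := mul_le_mul_of_nonneg_right h1 hsβs.le
      calc 2 * Real.sqrt (z s)
          = 2 * (Real.sqrt (z s) / Real.sqrt (β s)) * Real.sqrt (β s) := by
            field_simp
      _ ≤ hhat s * (β s - β (s-1)) * Real.sqrt (β s) := hh
    have hΔ : 0 ≤ β s - β (s-1) := aux_delta_nonneg' hu hhatpos hβ rule s hsI
    calc 2 * Real.sqrt (z s) ≤ hhat s * (β s - β (s-1)) * Real.sqrt (β s) := h2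
    _ ≤ H * (β s - β (s-1)) * Real.sqrt (β t) := by
        apply mul_le_mul
        · exact mul_le_mul_of_nonneg_right (hH s hsB) hΔ
        · exact hsle
        · exact hsβs.le
        · exact mul_nonneg (le_trans (hhatpos s hsI).le (hH s hsB)) hΔ
    _ = (β s - β (s-1)) * (H * Real.sqrt (β t)) := by ring
  have hsum : ∑ s ∈ B.filter (fun s => s ≤ t), (2 * Real.sqrt (z s))
      ≤ ∑ s ∈ B.filter (fun s => s ≤ t), (β s - β (s-1)) * (H * Real.sqrt (β t)) :=
    Finset.sum_le_sum key
  have hsub : B.filter (fun s => s ≤ t) ⊆ Icc 1 t := by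
    intro s hs
    obtain ⟨hsB, hst⟩ := mem_filter.mp hs
    exact mem_Icc.mpr ⟨(mem_Icc.mp (hB hsB)).1, hst⟩
  have hsum2 : ∑ s ∈ B.filter (fun s => s ≤ t), (β s - β (s-1))
      ≤ ∑ s ∈ Icc 1 t, (β s - β (s-1)) := by
    apply Finset.sum_le_sum_of_subset_of_nonneg hsub
    intro s hs _
    have hsI : s ∈ Icc 1 T := by
      obtain ⟨h1, h2⟩ := mem_Icc.mp hs
      exact mem_Icc.mpr ⟨h1, le_trans h2 ht2⟩
    exact aux_delta_nonneg' hu hhatpos hβ rule s hsI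
  have htel := aux_telescope' hβ0 t
  have h3 : ∑ s ∈ B.filter (fun s => s ≤ t), (β s - β (s-1)) * (H * Real.sqrt (β t))
      = (∑ s ∈ B.filter (fun s => s ≤ t), (β s - β (s-1))) * (H * Real.sqrt (β t)) :=
    (Finset.sum_mul _ _ _).symm
  have h4 : (∑ s ∈ B.filter (fun s => s ≤ t), (β s - β (s-1))) * (H * Real.sqrt (β t))
      ≤ β t * (H * Real.sqrt (β t)) := by
    apply mul_le_mul_of_nonneg_right (le_trans hsum2 (le_of_eq htel))
    exact mul_nonneg hHpos.le hsβt.le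
  have h5 : 2 * (∑ s ∈ B.filter (fun s => s ≤ t), Real.sqrt (z s))
      = ∑ s ∈ B.filter (fun s => s ≤ t), (2 * Real.sqrt (z s)) := by
    rw [Finset.mul_sum]
  rw [h5]
  calc ∑ s ∈ B.filter (fun s => s ≤ t), (2 * Real.sqrt (z s))
      ≤ β t * (H * Real.sqrt (β t)) := by
        rw [h3] at hsum; linarith
  _ = β t * Real.sqrt (β t) * H := by ring

include hz hu hhatpos hβ hβ0 rule in
lemma aux_ugrowth (B : Finset ℕ) (hB : B ⊆ Icc 1 T) (H : ℝ) (hHpos : 0 < H)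
    (hH : ∀ s ∈ B, hhat s ≤ H) :
    ∀ t ∈ Icc 1 T, (∑ s ∈ B with s ≤ t, u s) ≤ β t * β t * H := by
  intro t ht
  obtain ⟨ht1, ht2⟩ := mem_Icc.mp ht
  have hβt : 0 < β t := hβ t ht
  have key : ∀ s ∈ B.filter (fun s => s ≤ t),
      u s ≤ (β s - β (s-1)) * (H * β t) := by
    intro s hs
    obtain ⟨hsB, hst⟩ := mem_filter.mp hs
    have hsI : s ∈ Icc 1 T := hB hsB
    have hβs : 0 < β s := hβ s hsI
    have hmono : β s ≤ β t := aux_beta_mono' hu hhatpos hβ hβ0 rule s t hst ht2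
    have hmul := aux_hmul' hu hhatpos hβ rule s hsI
    have h1 : u s / β s ≤ hhat s * (β s - β (s-1)) := by
      have := Real.sqrt_nonneg (z s / β s)
      linarith [hmul]
    have h2 : u s ≤ hhat s * (β s - β (s-1)) * β s := by
      have hh := mul_le_mul_of_nonneg_right h1 hβs.le
      calc u s = u s / β s * β s := by field_simp
      _ ≤ hhat s * (β s - β (s-1)) * β s := hh
    have hΔ : 0 ≤ β s - β (s-1) := aux_delta_nonneg' hu hhatpos hβ rule s hsI
    calc u s ≤ hhat s * (β s - β (s-1)) * β s := h2
    _ ≤ H * (β s - β (s-1)) * β t := by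
        apply mul_le_mul
        · exact mul_le_mul_of_nonneg_right (hH s hsB) hΔ
        · exact hmono
        · exact hβs.le
        · exact mul_nonneg (le_trans (hhatpos s hsI).le (hH s hsB)) hΔ
    _ = (β s - β (s-1)) * (H * β t) := by ring
  have hsum : ∑ s ∈ B.filter (fun s => s ≤ t), u s
      ≤ ∑ s ∈ B.filter (fun s => s ≤ t), (β s - β (s-1)) * (H * β t) :=
    Finset.sum_le_sum key
  have hsub : B.filter (fun s => s ≤ t) ⊆ Icc 1 t := by
    intro s hs
    obtain ⟨hsB, hst⟩ := mem_filter.mp hs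
    exact mem_Icc.mpr ⟨(mem_Icc.mp (hB hsB)).1, hst⟩
  have hsum2 : ∑ s ∈ B.filter (fun s => s ≤ t), (β s - β (s-1))
      ≤ ∑ s ∈ Icc 1 t, (β s - β (s-1)) := by
    apply Finset.sum_le_sum_of_subset_of_nonneg hsub
    intro s hs _
    have hsI : s ∈ Icc 1 T := by
      obtain ⟨h1, h2⟩ := mem_Icc.mp hs
      exact mem_Icc.mpr ⟨h1, le_trans h2 ht2⟩
    exact aux_delta_nonneg' hu hhatpos hβ rule s hsI
  have htel := aux_telescope' hβ0 t
  calc ∑ s ∈ B.filter (fun s => s ≤ t), u s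
      ≤ (∑ s ∈ B.filter (fun s => s ≤ t), (β s - β (s-1))) * (H * β t) := by
        rw [← Finset.sum_mul] at hsum; exact hsum
  _ ≤ β t * (H * β t) := by
        apply mul_le_mul_of_nonneg_right (le_trans hsum2 (le_of_eq htel))
        exact mul_nonneg hHpos.le hβt.le
  _ = β t * β t * H := by ring


include hz hu hhatpos hβ hβ0 rule in
lemma aux_zsum_bucket (B : Finset ℕ) (hB : B ⊆ Icc 1 T) (H : ℝ) (hHpos : 0 < H)
    (hH : ∀ s ∈ B, hhat s ≤ H) :
    ∑ t ∈ B, 2 * Real.sqrt (z t / β t)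
      ≤ 3 * (∑ t ∈ B, Real.sqrt (z t * H)) ^ ((2:ℝ)/3) := by
  have claim : ∀ t : ℕ,
      ∑ s ∈ B.filter (fun s => s ≤ t), (2 * Real.sqrt (z s / β s))
        ≤ 3 * (H/2) ^ ((1:ℝ)/3) *
          (∑ s ∈ B.filter (fun s => s ≤ t), Real.sqrt (z s)) ^ ((2:ℝ)/3) := by
    intro t
    induction t with
    | zero =>
      have hempty : B.filter (fun s => s ≤ 0) = ∅ := by
        rw [Finset.filter_eq_empty_iff]
        intro s hs
        have := (mem_Icc.mp (hB hs)).1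
        omega
      rw [hempty]
      simp [Real.zero_rpow (by norm_num : ((2:ℝ)/3) ≠ 0)]
    | succ n ih =>
      by_cases hmem : (n+1) ∈ B
      · have hnotmem : (n+1) ∉ B.filter (fun s => s ≤ n) := by
          simp only [mem_filter]
          rintro ⟨-, hc⟩
          omega
        have hfe : B.filter (fun s => s ≤ n+1) = insert (n+1) (B.filter (fun s => s ≤ n)) := by
          ext s
          simp only [mem_filter, mem_insert]
          constructor
          · rintro ⟨hsB, hle⟩
            rcases eq_or_ne s (n+1) with rfl | hne
            · exact Or.inl rfl
            · exact Or.inr ⟨hsB, by omega⟩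
          · rintro (rfl | ⟨hsB, hle⟩)
            · exact ⟨hmem, le_refl _⟩
            · exact ⟨hsB, by omega⟩
        rw [hfe, Finset.sum_insert hnotmem, Finset.sum_insert hnotmem]
        set b := ∑ s ∈ B.filter (fun s => s ≤ n), Real.sqrt (z s) with hbdef
        set a := Real.sqrt (z (n+1)) + b with hadef
        have hbnn : 0 ≤ b := Finset.sum_nonneg fun s _ => Real.sqrt_nonneg _
        have hznn : 0 ≤ Real.sqrt (z (n+1)) := Real.sqrt_nonneg _
        have hann : 0 ≤ a := by positivity
        have hba : b ≤ a := by rw [hadef]; linarith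
        have hmemI : (n+1) ∈ Icc 1 T := hB hmem
        have hβp : 0 < β (n+1) := hβ (n+1) hmemI
        have hsβp : 0 < Real.sqrt (β (n+1)) := Real.sqrt_pos.mpr hβp
        have hgrow := aux_zgrowth hz hu hhatpos hβ hβ0 rule B hB H hHpos hH (n+1) hmemI
        have hVa : (∑ s ∈ B.filter (fun s => s ≤ n+1), Real.sqrt (z s)) = a := by
          rw [hfe, Finset.sum_insert hnotmem]
        have hdiv : Real.sqrt (z (n+1) / β (n+1))
            = Real.sqrt (z (n+1)) / Real.sqrt (β (n+1)) :=
          Real.sqrt_div (hz (n+1) hmemI) _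
        have hkey : 2 * Real.sqrt (z (n+1) / β (n+1))
            ≤ 3 * (H/2) ^ ((1:ℝ)/3) * (a ^ ((2:ℝ)/3) - b ^ ((2:ℝ)/3)) := by
          rcases eq_or_lt_of_le hann with hzero | hapos
          · -- a = 0 : everything is 0
            have ha0 : a = 0 := hzero.symm
            have hb0 : b = 0 := le_antisymm (by linarith) hbnn
            have hz0 : Real.sqrt (z (n+1)) = 0 := by
              have h' : Real.sqrt (z (n+1)) + b = 0 := by rw [← hadef]; exact ha0
              linarith
            rw [hdiv, hz0, ha0, hb0]
            simp
          · -- a > 0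
            have hgrow2 : 2 * a ≤ β (n+1) * Real.sqrt (β (n+1)) * H := by
              rw [hVa] at hgrow; exact hgrow
            set r := (2*a/H) ^ ((1:ℝ)/3) with hrdef
            have hrpos : 0 < r := Real.rpow_pos_of_pos (by positivity) _
            have hrβ : r ≤ Real.sqrt (β (n+1)) := by
              apply aux_le_cuberoot (Real.sqrt_nonneg _) (by positivity)
              have hcube : (Real.sqrt (β (n+1)))^3 = β (n+1) * Real.sqrt (β (n+1)) := by
                have := Real.sq_sqrt hβp.le
                nlinarith [this]
              rw [hcube, div_le_iff₀ hHpos]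
              linarith
            have h1 : 2 * Real.sqrt (z (n+1) / β (n+1)) ≤ 2 * (Real.sqrt (z (n+1)) / r) := by
              rw [hdiv]
              exact mul_le_mul_of_nonneg_left
                (div_le_div_of_nonneg_left hznn hrpos hrβ) (by norm_num)
            have hrc : r * (H/2) ^ ((1:ℝ)/3) = a ^ ((1:ℝ)/3) := by
              rw [hrdef, ← Real.mul_rpow (by positivity) (by positivity)]
              congr 1
              field_simp
            have hstep := aux_step_z hbnn hba
            have h2 : 2 * (Real.sqrt (z (n+1)) / r)
                ≤ 3 * (H/2) ^ ((1:ℝ)/3) * (a ^ ((2:ℝ)/3) - b ^ ((2:ℝ)/3)) := by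
              rw [← mul_div_assoc, div_le_iff₀ hrpos]
              have hzab : Real.sqrt (z (n+1)) = a - b := by rw [hadef]; ring
              rw [hzab]
              calc 2 * (a - b) ≤ 3 * a^((1:ℝ)/3) * (a^((2:ℝ)/3) - b^((2:ℝ)/3)) := hstep
              _ = 3 * (H/2) ^ ((1:ℝ)/3) * (a ^ ((2:ℝ)/3) - b ^ ((2:ℝ)/3)) * r := by
                  rw [← hrc]; ring
            exact le_trans h1 h2
        have hfinal := add_le_add hkey ih
        calc 2 * Real.sqrt (z (n+1) / β (n+1))
              + ∑ s ∈ B.filter (fun s => s ≤ n), (2 * Real.sqrt (z s / β s))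
            ≤ 3 * (H/2) ^ ((1:ℝ)/3) * (a ^ ((2:ℝ)/3) - b ^ ((2:ℝ)/3))
              + 3 * (H/2) ^ ((1:ℝ)/3) * b ^ ((2:ℝ)/3) := hfinal
        _ = 3 * (H/2) ^ ((1:ℝ)/3) * a ^ ((2:ℝ)/3) := by ring
        _ = 3 * (H/2) ^ ((1:ℝ)/3) * (Real.sqrt (z (n+1)) + b) ^ ((2:ℝ)/3) := by rw [hadef]
      · have hfe : B.filter (fun s => s ≤ n+1) = B.filter (fun s => s ≤ n) := by
          ext s
          simp only [mem_filter]
          constructor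
          · rintro ⟨hsB, hle⟩
            have hne : s ≠ n+1 := fun hh => hmem (hh ▸ hsB)
            exact ⟨hsB, by omega⟩
          · rintro ⟨hsB, hle⟩
            exact ⟨hsB, by omega⟩
        rw [hfe]
        exact ih
  have hBT : B.filter (fun s => s ≤ T) = B := by
    apply Finset.filter_true_of_mem
    intro s hs
    exact (mem_Icc.mp (hB hs)).2
  have hc := claim T
  rw [hBT] at hc
  -- now convert RHS
  have hV : 0 ≤ ∑ t ∈ B, Real.sqrt (z t) := Finset.sum_nonneg fun s _ => Real.sqrt_nonneg _
  have hrhs : (∑ t ∈ B, Real.sqrt (z t * H)) ^ ((2:ℝ)/3)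
      = (H:ℝ) ^ ((1:ℝ)/3) * (∑ t ∈ B, Real.sqrt (z t)) ^ ((2:ℝ)/3) := by
    have h1 : ∑ t ∈ B, Real.sqrt (z t * H) = Real.sqrt H * ∑ t ∈ B, Real.sqrt (z t) := by
      rw [Finset.mul_sum]
      apply Finset.sum_congr rfl
      intro s hs
      rw [Real.sqrt_mul (hz s (hB hs)), mul_comm]
    rw [h1, Real.mul_rpow (Real.sqrt_nonneg _) hV]
    congr 1
    rw [Real.sqrt_eq_rpow, ← Real.rpow_mul hHpos.le]
    norm_num
  rw [hrhs]
  calc ∑ t ∈ B, 2 * Real.sqrt (z t / β t)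
      ≤ 3 * (H/2) ^ ((1:ℝ)/3) * (∑ t ∈ B, Real.sqrt (z t)) ^ ((2:ℝ)/3) := hc
  _ ≤ 3 * (H ^ ((1:ℝ)/3) * (∑ t ∈ B, Real.sqrt (z t)) ^ ((2:ℝ)/3)) := by
      have h1 : (H/2 : ℝ) ^ ((1:ℝ)/3) ≤ H ^ ((1:ℝ)/3) :=
        Real.rpow_le_rpow (by positivity) (by linarith) (by norm_num)
      have h2 : (0:ℝ) ≤ (∑ t ∈ B, Real.sqrt (z t)) ^ ((2:ℝ)/3) := Real.rpow_nonneg hV _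
      nlinarith [h1, h2, Real.rpow_nonneg (by positivity : (0:ℝ) ≤ H/2) ((1:ℝ)/3)]

include hz hu hhatpos hβ hβ0 rule in
lemma aux_usum_bucket (B : Finset ℕ) (hB : B ⊆ Icc 1 T) (H : ℝ) (hHpos : 0 < H)
    (hH : ∀ s ∈ B, hhat s ≤ H) :
    ∑ t ∈ B, u t / β t ≤ 2 * Real.sqrt (∑ t ∈ B, u t * H) := by
  have claim : ∀ t : ℕ,
      ∑ s ∈ B.filter (fun s => s ≤ t), (u s / β s)
        ≤ 2 * Real.sqrt H * Real.sqrt (∑ s ∈ B.filter (fun s => s ≤ t), u s) := by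
    intro t
    induction t with
    | zero =>
      have hempty : B.filter (fun s => s ≤ 0) = ∅ := by
        rw [Finset.filter_eq_empty_iff]
        intro s hs
        have := (mem_Icc.mp (hB hs)).1
        omega
      rw [hempty]
      simp
    | succ n ih =>
      by_cases hmem : (n+1) ∈ B
      · have hnotmem : (n+1) ∉ B.filter (fun s => s ≤ n) := by
          simp only [mem_filter]
          rintro ⟨-, hc⟩
          omega
        have hfe : B.filter (fun s => s ≤ n+1) = insert (n+1) (B.filter (fun s => s ≤ n)) := by
          ext s
          simp only [mem_filter, mem_insert]
          constructor
          · rintro ⟨hsB, hle⟩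
            rcases eq_or_ne s (n+1) with rfl | hne
            · exact Or.inl rfl
            · exact Or.inr ⟨hsB, by omega⟩
          · rintro (rfl | ⟨hsB, hle⟩)
            · exact ⟨hmem, le_refl _⟩
            · exact ⟨hsB, by omega⟩
        rw [hfe, Finset.sum_insert hnotmem, Finset.sum_insert hnotmem]
        set b := ∑ s ∈ B.filter (fun s => s ≤ n), u s with hbdef
        set a := u (n+1) + b with hadef
        have hmemI : (n+1) ∈ Icc 1 T := hB hmem
        have hbnn : 0 ≤ b := Finset.sum_nonneg fun s hs => hu s (hB (mem_filter.mp hs).1)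
        have hunn : 0 ≤ u (n+1) := hu (n+1) hmemI
        have hann : 0 ≤ a := by positivity
        have hba : b ≤ a := by rw [hadef]; linarith
        have hβp : 0 < β (n+1) := hβ (n+1) hmemI
        have hgrow := aux_ugrowth hz hu hhatpos hβ hβ0 rule B hB H hHpos hH (n+1) hmemI
        have hVa : (∑ s ∈ B.filter (fun s => s ≤ n+1), u s) = a := by
          rw [hfe, Finset.sum_insert hnotmem]
        have hgrow2 : a ≤ β (n+1) * β (n+1) * H := by
          rw [hVa] at hgrow; exact hgrow
        have hkey : u (n+1) / β (n+1)
            ≤ 2 * Real.sqrt H * (Real.sqrt a - Real.sqrt b) := by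
          rcases eq_or_lt_of_le hann with hzero | hapos
          · have ha0 : u (n+1) + b = 0 := by rw [← hadef]; exact hzero.symm
            have hu0 : u (n+1) = 0 := by linarith
            have hb0 : b = 0 := by linarith
            have ha0' : a = 0 := hzero.symm
            rw [hu0, ha0', hb0]
            simp
          · have hβlow : Real.sqrt a / Real.sqrt H ≤ β (n+1) := by
              rw [div_le_iff₀ (Real.sqrt_pos.mpr hHpos)]
              have h1 : a ≤ (β (n+1) * Real.sqrt H)^2 := by
                have hsH : (Real.sqrt H)^2 = H := Real.sq_sqrt hHpos.le
                nlinarith [hgrow2]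
              calc Real.sqrt a ≤ Real.sqrt ((β (n+1) * Real.sqrt H)^2) :=
                    Real.sqrt_le_sqrt h1
              _ = β (n+1) * Real.sqrt H :=
                    Real.sqrt_sq (by positivity)
            have hsapos : 0 < Real.sqrt a := Real.sqrt_pos.mpr hapos
            have h1 : u (n+1) / β (n+1) ≤ u (n+1) * Real.sqrt H / Real.sqrt a := by
              have hd : 0 < Real.sqrt a / Real.sqrt H := by positivity
              calc u (n+1) / β (n+1) ≤ u (n+1) / (Real.sqrt a / Real.sqrt H) :=
                    div_le_div_of_nonneg_left hunn hd hβlow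
              _ = u (n+1) * Real.sqrt H / Real.sqrt a := by
                    field_simp
            have hstep := aux_step_u hbnn hba
            have h2 : u (n+1) * Real.sqrt H / Real.sqrt a
                ≤ 2 * Real.sqrt H * (Real.sqrt a - Real.sqrt b) := by
              rw [div_le_iff₀ hsapos]
              have huab : u (n+1) = a - b := by rw [hadef]; ring
              rw [huab]
              have hsHnn : 0 ≤ Real.sqrt H := Real.sqrt_nonneg _
              nlinarith [hstep, hsHnn]
            exact le_trans h1 h2
        have hfinal := add_le_add hkey ih
        calc u (n+1) / β (n+1) + ∑ s ∈ B.filter (fun s => s ≤ n), (u s / β s)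
            ≤ 2 * Real.sqrt H * (Real.sqrt a - Real.sqrt b)
              + 2 * Real.sqrt H * Real.sqrt b := hfinal
        _ = 2 * Real.sqrt H * Real.sqrt a := by ring
        _ = 2 * Real.sqrt H * Real.sqrt (u (n+1) + b) := by rw [hadef]
      · have hfe : B.filter (fun s => s ≤ n+1) = B.filter (fun s => s ≤ n) := by
          ext s
          simp only [mem_filter]
          constructor
          · rintro ⟨hsB, hle⟩
            have hne : s ≠ n+1 := fun hh => hmem (hh ▸ hsB)
            exact ⟨hsB, by omega⟩
          · rintro ⟨hsB, hle⟩
            exact ⟨hsB, by omega⟩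
        rw [hfe]
        exact ih
  have hBT : B.filter (fun s => s ≤ T) = B := by
    apply Finset.filter_true_of_mem
    intro s hs
    exact (mem_Icc.mp (hB hs)).2
  have hc := claim T
  rw [hBT] at hc
  have hU : 0 ≤ ∑ t ∈ B, u t := Finset.sum_nonneg fun s hs => hu s (hB hs)
  have hrhs : 2 * Real.sqrt H * Real.sqrt (∑ t ∈ B, u t)
      = 2 * Real.sqrt (∑ t ∈ B, u t * H) := by
    have hsum : ∑ t ∈ B, u t * H = H * ∑ t ∈ B, u t := by
      rw [← Finset.sum_mul, mul_comm]
    rw [hsum, Real.sqrt_mul hHpos.le, mul_assoc]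
  calc ∑ t ∈ B, u t / β t ≤ 2 * Real.sqrt H * Real.sqrt (∑ t ∈ B, u t) := hc
  _ = 2 * Real.sqrt (∑ t ∈ B, u t * H) := hrhs

end BetaStruct


lemma aux_sqrt_rpow23 {x : ℝ} (hx : 0 ≤ x) :
    (Real.sqrt x) ^ ((2:ℝ)/3) = x ^ ((1:ℝ)/3) := by
  rw [Real.sqrt_eq_rpow, ← Real.rpow_mul hx]
  norm_num

lemma aux_eight_rpow : ((8:ℝ)) ^ ((1:ℝ)/3) = 2 := by
  rw [show (8:ℝ) = (2:ℝ)^(3:ℕ) by norm_num, ← Real.rpow_natCast (2:ℝ) 3,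
    ← Real.rpow_mul (by norm_num : (0:ℝ) ≤ 2)]
  norm_num

lemma aux_exp23 : (Real.exp 1) ^ ((2:ℝ)/3) ≤ 2 := by
  rw [Real.exp_one_rpow]
  have h1 : (2:ℝ)/3 ≤ Real.log 2 := by nlinarith [Real.log_two_gt_d9]
  calc Real.exp ((2:ℝ)/3) ≤ Real.exp (Real.log 2) := Real.exp_le_exp.mpr h1
  _ = 2 := Real.exp_log (by norm_num)

lemma aux_powermean {ι : Type*} (s : Finset ι) (f : ι → ℝ) (hf : ∀ i ∈ s, 0 ≤ f i) :
    ∑ i ∈ s, (f i) ^ ((2:ℝ)/3)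
      ≤ (s.card : ℝ) ^ ((1:ℝ)/3) * (∑ i ∈ s, f i) ^ ((2:ℝ)/3) := by
  rcases s.eq_empty_or_nonempty with rfl | hne
  · simp
  · have hm : (0:ℝ) < s.card := by exact_mod_cast card_pos.mpr hne
    set m := (s.card : ℝ) with hmdef
    set A := ∑ i ∈ s, (f i) ^ ((2:ℝ)/3) with hAdef
    set Bs := ∑ i ∈ s, f i with hBdef
    have hAnn : 0 ≤ A := Finset.sum_nonneg fun i hi => Real.rpow_nonneg (hf i hi) _
    have hBnn : 0 ≤ Bs := Finset.sum_nonneg hf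
    have key : ((1/m) * A) ^ ((3:ℝ)/2) ≤ (1/m) * Bs := by
      have h1 := Real.rpow_arith_mean_le_arith_mean_rpow s (fun _ => 1/m)
        (fun i => (f i) ^ ((2:ℝ)/3))
        (fun i _ => by positivity)
        (by rw [Finset.sum_const, nsmul_eq_mul]; field_simp; rfl)
        (fun i hi => Real.rpow_nonneg (hf i hi) _)
        (by norm_num : (1:ℝ) ≤ (3:ℝ)/2)
      have h2 : ∑ i ∈ s, (1/m) * (f i) ^ ((2:ℝ)/3) = (1/m) * A := by
        rw [hAdef, Finset.mul_sum]
      have h3 : ∑ i ∈ s, (1/m) * ((f i) ^ ((2:ℝ)/3)) ^ ((3:ℝ)/2) = (1/m) * Bs := by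
        rw [hBdef, Finset.mul_sum]
        apply Finset.sum_congr rfl
        intro i hi
        rw [← Real.rpow_mul (hf i hi)]
        norm_num
      rw [h2, h3] at h1
      exact h1
    have key2 : (1/m) * A ≤ ((1/m) * Bs) ^ ((2:ℝ)/3) := by
      have h4 : (((1/m) * A) ^ ((3:ℝ)/2)) ^ ((2:ℝ)/3) = (1/m) * A := by
        rw [← Real.rpow_mul (by positivity)]
        norm_num
      calc (1/m) * A = (((1/m) * A) ^ ((3:ℝ)/2)) ^ ((2:ℝ)/3) := h4.symm
      _ ≤ ((1/m) * Bs) ^ ((2:ℝ)/3) :=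
          Real.rpow_le_rpow (Real.rpow_nonneg (by positivity) _) key (by norm_num)
    have hsplit : ((1/m) * Bs) ^ ((2:ℝ)/3) = (1/m) ^ ((2:ℝ)/3) * Bs ^ ((2:ℝ)/3) :=
      Real.mul_rpow (by positivity) hBnn
    have hmpow : m * (1/m) ^ ((2:ℝ)/3) = m ^ ((1:ℝ)/3) := by
      rw [one_div, Real.inv_rpow hm.le]
      have hm23 : (0:ℝ) < m ^ ((2:ℝ)/3) := Real.rpow_pos_of_pos hm _
      have hmm : m ^ ((1:ℝ)/3) * m ^ ((2:ℝ)/3) = m := by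
        rw [← Real.rpow_add hm]
        norm_num
      field_simp
      linarith [hmm]
    calc A = m * ((1/m) * A) := by field_simp
    _ ≤ m * ((1/m) * Bs) ^ ((2:ℝ)/3) := by
        apply mul_le_mul_of_nonneg_left key2 hm.le
    _ = m * (1/m) ^ ((2:ℝ)/3) * Bs ^ ((2:ℝ)/3) := by rw [hsplit]; ring
    _ = m ^ ((1:ℝ)/3) * Bs ^ ((2:ℝ)/3) := by rw [hmpow]

lemma aux_sqrtsum {ι : Type*} (s : Finset ι) (f : ι → ℝ) (hf : ∀ i ∈ s, 0 ≤ f i) :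
    ∑ i ∈ s, Real.sqrt (f i) ≤ Real.sqrt ((s.card : ℝ) * ∑ i ∈ s, f i) := by
  rw [Real.le_sqrt (Finset.sum_nonneg fun i _ => Real.sqrt_nonneg _)
    (mul_nonneg (Nat.cast_nonneg _) (Finset.sum_nonneg hf))]
  have h1 : (∑ i ∈ s, Real.sqrt (f i)) ^ 2 ≤ (s.card : ℝ) * ∑ i ∈ s, (Real.sqrt (f i))^2 :=
    sq_sum_le_card_mul_sum_sq
  have h2 : ∑ i ∈ s, (Real.sqrt (f i))^2 = ∑ i ∈ s, f i :=
    Finset.sum_congr rfl fun i hi => Real.sq_sqrt (hf i hi)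
  rw [h2] at h1
  exact h1



/-- `F(β_{1:T}, z_{1:T}, u_{1:T}, h_{1:T})
  = ∑_{t=1}^T ( 2√(z_t/β_t) + u_t/β_t + (β_t − β_{t−1}) h_t )`, where `β 0 = 0`. -/
noncomputable def F (T : ℕ) (β z u h : ℕ → ℝ) : ℝ :=
  ∑ t ∈ Finset.Icc 1 T,
    (2 * Real.sqrt (z t / β t) + u t / β t + (β t - β (t - 1)) * h t)

set_option maxHeartbeats 2000000 in
theorem stmt_5 :
    ∃ K : ℝ, 0 < K ∧
      ∀ (T : ℕ) (hT : 1 ≤ T) (z u h hhat β : ℕ → ℝ),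
        (∀ t ∈ Finset.Icc 1 T, 0 ≤ z t) →
        (∀ t ∈ Finset.Icc 1 T, 0 ≤ u t) →
        (∀ t ∈ Finset.Icc 1 T, 0 < h t) →
        (∀ t ∈ Finset.Icc 1 T, 0 < hhat t) →
        (∀ t ∈ Finset.Icc 1 T, h t ≤ hhat t) →
        (∀ t ∈ Finset.Icc 1 T, 0 < β t) →
        β 0 = 0 →
        (∀ t ∈ Finset.Icc 1 T,
          β t = β (t - 1) + (1 / hhat t) * (2 * Real.sqrt (z t / β t) + u t / β t)) →
        ∀ ε : ℝ, 1 / (T : ℝ) ≤ ε →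
          F T β z u h ≤ K *
            (min
              ((∑ t ∈ Finset.Icc 1 T,
                  Real.sqrt (z t * hhat t * Real.log (ε * T))) ^ ((2 : ℝ) / 3)
                + (Real.sqrt
                      (((Finset.Icc 1 T).sup' (Finset.nonempty_Icc.mpr hT) z)
                        * ((Finset.Icc 1 T).sup' (Finset.nonempty_Icc.mpr hT) hhat)) / ε)
                    ^ ((2 : ℝ) / 3))
              ((∑ t ∈ Finset.Icc 1 T,
                  Real.sqrt (z t
                    * ((Finset.Icc 1 T).sup' (Finset.nonempty_Icc.mpr hT) hhat)))
                ^ ((2 : ℝ) / 3))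
            + min
              (Real.sqrt (∑ t ∈ Finset.Icc 1 T, u t * hhat t * Real.log (ε * T))
                + Real.sqrt
                    (((Finset.Icc 1 T).sup' (Finset.nonempty_Icc.mpr hT) u)
                      * ((Finset.Icc 1 T).sup' (Finset.nonempty_Icc.mpr hT) hhat) / ε))
              (Real.sqrt (∑ t ∈ Finset.Icc 1 T,
                  u t * ((Finset.Icc 1 T).sup' (Finset.nonempty_Icc.mpr hT) hhat)))) := by
  refine ⟨12, by norm_num, ?_⟩
  intro T hT z u h hhat β hz hu hh hhatpos hle hβ hβ0 rule ε hε
  have hone : (1:ℕ) ∈ Finset.Icc 1 T := mem_Icc.mpr ⟨le_refl 1, hT⟩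
  have hTpos : (0:ℝ) < (T:ℝ) := by
    have : (0:ℕ) < T := by omega
    exact_mod_cast this
  have hεpos : 0 < ε := lt_of_lt_of_le (by positivity) hε
  have hεT : 1 ≤ ε * (T:ℝ) := by
    rw [div_le_iff₀ hTpos] at hε
    linarith
  set Hm := (Finset.Icc 1 T).sup' (Finset.nonempty_Icc.mpr hT) hhat with hHmdef
  set Zm := (Finset.Icc 1 T).sup' (Finset.nonempty_Icc.mpr hT) z with hZmdef
  set Um := (Finset.Icc 1 T).sup' (Finset.nonempty_Icc.mpr hT) u with hUmdef
  have hHmpos : 0 < Hm := lt_of_lt_of_le (hhatpos 1 hone) (Finset.le_sup' hhat hone)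
  have hZnn : 0 ≤ Zm := le_trans (hz 1 hone) (Finset.le_sup' z hone)
  have hUnn : 0 ≤ Um := le_trans (hu 1 hone) (Finset.le_sup' u hone)
  have hhatHm : ∀ t ∈ Finset.Icc 1 T, hhat t ≤ Hm := fun t ht => Finset.le_sup' hhat ht
  have hzZm : ∀ t ∈ Finset.Icc 1 T, z t ≤ Zm := fun t ht => Finset.le_sup' z ht
  have huUm : ∀ t ∈ Finset.Icc 1 T, u t ≤ Um := fun t ht => Finset.le_sup' u ht
  have hLnn : 0 ≤ Real.log (ε * T) := Real.log_nonneg hεT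
  set X := ∑ t ∈ Finset.Icc 1 T, 2 * Real.sqrt (z t / β t) with hXdef
  set Y := ∑ t ∈ Finset.Icc 1 T, u t / β t with hYdef
  set A1 := (∑ t ∈ Finset.Icc 1 T,
      Real.sqrt (z t * hhat t * Real.log (ε * T))) ^ ((2 : ℝ) / 3)
    + (Real.sqrt (Zm * Hm) / ε) ^ ((2 : ℝ) / 3) with hA1def
  set A2 := (∑ t ∈ Finset.Icc 1 T, Real.sqrt (z t * Hm)) ^ ((2 : ℝ) / 3) with hA2def
  set B1 := Real.sqrt (∑ t ∈ Finset.Icc 1 T, u t * hhat t * Real.log (ε * T))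
    + Real.sqrt (Um * Hm / ε) with hB1def
  set B2 := Real.sqrt (∑ t ∈ Finset.Icc 1 T, u t * Hm) with hB2def
  have hA1nn : 0 ≤ A1 := by
    rw [hA1def]
    have h1 : (0:ℝ) ≤ (∑ t ∈ Finset.Icc 1 T,
        Real.sqrt (z t * hhat t * Real.log (ε * T))) ^ ((2 : ℝ) / 3) :=
      Real.rpow_nonneg (Finset.sum_nonneg fun t _ => Real.sqrt_nonneg _) _
    have h2 : (0:ℝ) ≤ (Real.sqrt (Zm * Hm) / ε) ^ ((2 : ℝ) / 3) :=
      Real.rpow_nonneg (by positivity) _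
    linarith
  have hA2nn : 0 ≤ A2 :=
    Real.rpow_nonneg (Finset.sum_nonneg fun t _ => Real.sqrt_nonneg _) _
  have hB1nn : 0 ≤ B1 := by
    rw [hB1def]
    have := Real.sqrt_nonneg (∑ t ∈ Finset.Icc 1 T, u t * hhat t * Real.log (ε * T))
    have := Real.sqrt_nonneg (Um * Hm / ε)
    linarith
  have hB2nn : 0 ≤ B2 := Real.sqrt_nonneg _
  clear_value X Y A1 A2 B1 B2
  -- step 1 : F ≤ 2X + 2Y
  have hF : F T β z u h ≤ 2 * X + 2 * Y := by
    have hper : ∀ t ∈ Finset.Icc 1 T,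
        2 * Real.sqrt (z t / β t) + u t / β t + (β t - β (t-1)) * h t
          ≤ 2 * (2 * Real.sqrt (z t / β t)) + 2 * (u t / β t) := by
      intro t ht
      have hmul := aux_hmul' hu hhatpos hβ rule t ht
      have hΔ := aux_delta_nonneg' hu hhatpos hβ rule t ht
      have h1 : (β t - β (t-1)) * h t ≤ (β t - β (t-1)) * hhat t :=
        mul_le_mul_of_nonneg_left (hle t ht) hΔ
      have h2 : (β t - β (t-1)) * hhat t = 2 * Real.sqrt (z t / β t) + u t / β t := by
        rw [mul_comm]; exact hmul
      linarith
    have hstep : F T β z u h ≤ ∑ t ∈ Finset.Icc 1 T,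
        (2 * (2 * Real.sqrt (z t / β t)) + 2 * (u t / β t)) := by
      simp only [F]
      exact Finset.sum_le_sum hper
    calc F T β z u h ≤ ∑ t ∈ Finset.Icc 1 T,
        (2 * (2 * Real.sqrt (z t / β t)) + 2 * (u t / β t)) := hstep
    _ = 2 * X + 2 * Y := by
        rw [hXdef, hYdef, Finset.sum_add_distrib, Finset.mul_sum, Finset.mul_sum]
  -- step 2 : no-log bounds
  have hX2 : X ≤ 3 * A2 := by
    rw [hXdef, hA2def]
    exact aux_zsum_bucket hz hu hhatpos hβ hβ0 rule (Finset.Icc 1 T)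
      (Finset.Subset.refl _) Hm hHmpos hhatHm
  have hY2 : Y ≤ 2 * B2 := by
    rw [hYdef, hB2def]
    exact aux_usum_bucket hz hu hhatpos hβ hβ0 rule (Finset.Icc 1 T)
      (Finset.Subset.refl _) Hm hHmpos hhatHm
  -- step 3 : log bounds
  have hlog : X ≤ 6 * A1 ∧ Y ≤ 6 * B1 := by
    have ht1znn : (0:ℝ) ≤ (∑ t ∈ Finset.Icc 1 T,
        Real.sqrt (z t * hhat t * Real.log (ε * T))) ^ ((2 : ℝ) / 3) :=
      Real.rpow_nonneg (Finset.sum_nonneg fun t _ => Real.sqrt_nonneg _) _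
    have ht2znn : (0:ℝ) ≤ (Real.sqrt (Zm * Hm) / ε) ^ ((2 : ℝ) / 3) :=
      Real.rpow_nonneg (by positivity) _
    have ht1unn : (0:ℝ) ≤ Real.sqrt (∑ t ∈ Finset.Icc 1 T,
        u t * hhat t * Real.log (ε * T)) := Real.sqrt_nonneg _
    have ht2unn : (0:ℝ) ≤ Real.sqrt (Um * Hm / ε) := Real.sqrt_nonneg _
    by_cases hsmall : ε * (T:ℝ) < Real.exp 1
    · -- small case : εT < e, use the crude bound and the 1/ε term
      constructor
      · -- X part
        have hbound : ∑ t ∈ Finset.Icc 1 T, Real.sqrt (z t * Hm)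
            ≤ (T:ℝ) * Real.sqrt (Zm * Hm) := by
          calc ∑ t ∈ Finset.Icc 1 T, Real.sqrt (z t * Hm)
              ≤ ∑ _t ∈ Finset.Icc 1 T, Real.sqrt (Zm * Hm) :=
              Finset.sum_le_sum fun t ht =>
                Real.sqrt_le_sqrt (mul_le_mul_of_nonneg_right (hzZm t ht) hHmpos.le)
          _ = (T:ℝ) * Real.sqrt (Zm * Hm) := by
              rw [Finset.sum_const, Nat.card_Icc, Nat.add_sub_cancel, nsmul_eq_mul]
        have hTe : (T:ℝ) * Real.sqrt (Zm * Hm) ≤ Real.exp 1 * (Real.sqrt (Zm * Hm) / ε) := by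
          have hT1 : (T:ℝ) ≤ Real.exp 1 / ε := by
            rw [le_div_iff₀ hεpos]
            linarith [hsmall.le]
          calc (T:ℝ) * Real.sqrt (Zm * Hm) ≤ (Real.exp 1 / ε) * Real.sqrt (Zm * Hm) :=
              mul_le_mul_of_nonneg_right hT1 (Real.sqrt_nonneg _)
          _ = Real.exp 1 * (Real.sqrt (Zm * Hm) / ε) := by ring
        have hXA2' : X ≤ 3 * (Real.exp 1 * (Real.sqrt (Zm * Hm) / ε)) ^ ((2:ℝ)/3) := by
          refine le_trans hX2 ?_
          rw [hA2def]
          have hr := Real.rpow_le_rpow (Finset.sum_nonneg fun t _ => Real.sqrt_nonneg _)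
            (le_trans hbound hTe) (by norm_num : (0:ℝ) ≤ 2/3)
          linarith
        have hsplit : (Real.exp 1 * (Real.sqrt (Zm * Hm) / ε)) ^ ((2:ℝ)/3)
            = (Real.exp 1) ^ ((2:ℝ)/3) * (Real.sqrt (Zm * Hm) / ε) ^ ((2:ℝ)/3) :=
          Real.mul_rpow (Real.exp_pos 1).le (by positivity)
        have he23 : (Real.exp 1) ^ ((2:ℝ)/3) ≤ 2 := aux_exp23
        rw [hA1def]
        have hfin : X ≤ 3 * (2 * (Real.sqrt (Zm * Hm) / ε) ^ ((2:ℝ)/3)) := by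
          rw [hsplit] at hXA2'
          have hmm : (Real.exp 1) ^ ((2:ℝ)/3) * (Real.sqrt (Zm * Hm) / ε) ^ ((2:ℝ)/3)
              ≤ 2 * (Real.sqrt (Zm * Hm) / ε) ^ ((2:ℝ)/3) :=
            mul_le_mul_of_nonneg_right he23 ht2znn
          linarith
        linarith
      · -- Y part
        have hbound : ∑ t ∈ Finset.Icc 1 T, u t * Hm ≤ (T:ℝ) * (Um * Hm) := by
          calc ∑ t ∈ Finset.Icc 1 T, u t * Hm
              ≤ ∑ _t ∈ Finset.Icc 1 T, Um * Hm :=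
              Finset.sum_le_sum fun t ht =>
                mul_le_mul_of_nonneg_right (huUm t ht) hHmpos.le
          _ = (T:ℝ) * (Um * Hm) := by
              rw [Finset.sum_const, Nat.card_Icc, Nat.add_sub_cancel, nsmul_eq_mul]
        have hTe : (T:ℝ) * (Um * Hm) ≤ Real.exp 1 * (Um * Hm / ε) := by
          have hT1 : (T:ℝ) ≤ Real.exp 1 / ε := by
            rw [le_div_iff₀ hεpos]
            linarith [hsmall.le]
          calc (T:ℝ) * (Um * Hm) ≤ (Real.exp 1 / ε) * (Um * Hm) :=
              mul_le_mul_of_nonneg_right hT1 (by positivity)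
          _ = Real.exp 1 * (Um * Hm / ε) := by ring
        have hYA2' : Y ≤ 2 * Real.sqrt (Real.exp 1 * (Um * Hm / ε)) := by
          refine le_trans hY2 ?_
          rw [hB2def]
          have hr := Real.sqrt_le_sqrt (le_trans hbound hTe)
          linarith
        have hsplit : Real.sqrt (Real.exp 1 * (Um * Hm / ε))
            = Real.sqrt (Real.exp 1) * Real.sqrt (Um * Hm / ε) :=
          Real.sqrt_mul (Real.exp_pos 1).le _
        have hse : Real.sqrt (Real.exp 1) ≤ 2 := by
          have h4 : Real.sqrt (Real.exp 1) ≤ Real.sqrt 4 :=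
            Real.sqrt_le_sqrt (by nlinarith [Real.exp_one_lt_d9])
          rwa [show (4:ℝ) = 2^2 by norm_num, Real.sqrt_sq (by norm_num : (0:ℝ) ≤ 2)] at h4
        rw [hB1def]
        have hfin : Y ≤ 2 * (2 * Real.sqrt (Um * Hm / ε)) := by
          rw [hsplit] at hYA2'
          have hmm : Real.sqrt (Real.exp 1) * Real.sqrt (Um * Hm / ε)
              ≤ 2 * Real.sqrt (Um * Hm / ε) :=
            mul_le_mul_of_nonneg_right hse ht2unn
          linarith
        linarith
    · -- big case
      push_neg at hsmall
      have hL1 : 1 ≤ Real.log (ε * T) := by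
        calc (1:ℝ) = Real.log (Real.exp 1) := (Real.log_exp 1).symm
        _ ≤ Real.log (ε * T) := Real.log_le_log (Real.exp_pos 1) hsmall
      set n := ⌈Real.logb 2 ((ε * (T:ℝ))^2)⌉₊ with hndef
      have hx2pos : (0:ℝ) < (ε * (T:ℝ))^2 := by positivity
      have h2n : (ε * (T:ℝ))^2 ≤ (2:ℝ)^(n:ℕ) := by
        have h1 : Real.logb 2 ((ε * (T:ℝ))^2) ≤ (n:ℝ) := Nat.le_ceil _
        have h2 := (Real.logb_le_iff_le_rpow (by norm_num : (1:ℝ) < 2) hx2pos).mp h1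
        rwa [Real.rpow_natCast] at h2
      have hsqrt2n : ε * (T:ℝ) ≤ Real.sqrt ((2:ℝ)^(n:ℕ)) := by
        have h1 := Real.sqrt_le_sqrt h2n
        rwa [Real.sqrt_sq (by positivity)] at h1
      have hone_sq : (1:ℝ) ≤ (ε * (T:ℝ))^2 := by
        rw [pow_two]
        exact le_trans (by norm_num) (mul_le_mul hεT hεT zero_le_one (by positivity))
      have hlogb_nn : 0 ≤ Real.logb 2 ((ε * (T:ℝ))^2) :=
        Real.logb_nonneg (by norm_num) hone_sq
      have hn4L : (n:ℝ) ≤ 4 * Real.log (ε * T) := by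
        have h1 : (n:ℝ) < Real.logb 2 ((ε * (T:ℝ))^2) + 1 := Nat.ceil_lt_add_one hlogb_nn
        have h2 : Real.logb 2 ((ε * (T:ℝ))^2) ≤ 3 * Real.log (ε * T) := by
          rw [Real.logb, Real.log_pow]
          rw [div_le_iff₀ (Real.log_pos (by norm_num))]
          push_cast
          have hl2 := Real.log_two_gt_d9
          have hprod : (0:ℝ) ≤ Real.log (ε*(T:ℝ)) * (3 * Real.log 2 - 2) :=
            mul_nonneg hLnn (by linarith)
          nlinarith [hprod]
        linarith
      set lvl : ℕ → ℕ := fun t => min (⌊Real.logb 2 (Hm / hhat t)⌋₊) n with hlvldef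
      have hmaps : ∀ t ∈ Finset.Icc 1 T, lvl t ∈ Finset.range (n+1) := by
        intro t _
        rw [Finset.mem_range, hlvldef]
        exact Nat.lt_succ_of_le (min_le_right _ _)
      have hupperk : ∀ k, ∀ t ∈ (Finset.Icc 1 T).filter (fun t => lvl t = k),
          hhat t ≤ Hm / 2^k := by
        intro k t ht
        obtain ⟨htI, hlv⟩ := Finset.mem_filter.mp ht
        have hm' : k ≤ ⌊Real.logb 2 (Hm / hhat t)⌋₊ := by
          simp only [hlvldef] at hlv
          omega
        have hratio : (1:ℝ) ≤ Hm / hhat t := (one_le_div (hhatpos t htI)).mpr (hhatHm t htI)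
        have hlnn2 : 0 ≤ Real.logb 2 (Hm / hhat t) := Real.logb_nonneg (by norm_num) hratio
        have hkle : (k:ℝ) ≤ Real.logb 2 (Hm / hhat t) :=
          le_trans (by exact_mod_cast hm') (Nat.floor_le hlnn2)
        have h2k : (2:ℝ)^(k:ℕ) ≤ Hm / hhat t := by
          have h0 := (Real.le_logb_iff_rpow_le (by norm_num : (1:ℝ) < 2) (by positivity)).mp hkle
          rwa [Real.rpow_natCast] at h0
        rw [le_div_iff₀ (by positivity : (0:ℝ) < (2:ℝ)^k)]
        rw [le_div_iff₀ (hhatpos t htI)] at h2k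
        linarith [h2k]
      have hlowk : ∀ k, k < n → ∀ t ∈ (Finset.Icc 1 T).filter (fun t => lvl t = k),
          Hm / 2^k ≤ 2 * hhat t := by
        intro k hk t ht
        obtain ⟨htI, hlv⟩ := Finset.mem_filter.mp ht
        have hm' : ⌊Real.logb 2 (Hm / hhat t)⌋₊ = k := by
          simp only [hlvldef] at hlv
          omega
        have hlt : Real.logb 2 (Hm / hhat t) < (k:ℝ) + 1 := by
          have h0 := Nat.lt_floor_add_one (Real.logb 2 (Hm / hhat t))
          rw [hm'] at h0
          exact_mod_cast h0
        have hratio : (0:ℝ) < Hm / hhat t := div_pos hHmpos (hhatpos t htI)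
        have h2 := (Real.logb_lt_iff_lt_rpow (by norm_num : (1:ℝ) < 2) hratio).mp hlt
        have h3 : Hm / hhat t < (2:ℝ)^(k+1:ℕ) := by
          rwa [show ((k:ℝ)+1) = ((k+1:ℕ):ℝ) by push_cast; ring, Real.rpow_natCast] at h2
        rw [div_le_iff₀ (by positivity : (0:ℝ) < (2:ℝ)^k)]
        rw [div_lt_iff₀ (hhatpos t htI)] at h3
        have h4 : (2:ℝ)^(k+1:ℕ) = 2 * 2^k := by ring
        rw [h4] at h3
        linarith [h3]
      -- partitions
      have hXpart : ∑ k ∈ Finset.range (n+1),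
          ∑ t ∈ (Finset.Icc 1 T).filter (fun t => lvl t = k), (2 * Real.sqrt (z t / β t))
            = ∑ t ∈ Finset.Icc 1 T, 2 * Real.sqrt (z t / β t) :=
        Finset.sum_fiberwise_of_maps_to hmaps _
      have hYpart : ∑ k ∈ Finset.range (n+1),
          ∑ t ∈ (Finset.Icc 1 T).filter (fun t => lvl t = k), (u t / β t)
            = ∑ t ∈ Finset.Icc 1 T, u t / β t :=
        Finset.sum_fiberwise_of_maps_to hmaps _
      have hWpart : ∑ k ∈ Finset.range (n+1),
          ∑ t ∈ (Finset.Icc 1 T).filter (fun t => lvl t = k), Real.sqrt (z t * hhat t)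
            = ∑ t ∈ Finset.Icc 1 T, Real.sqrt (z t * hhat t) :=
        Finset.sum_fiberwise_of_maps_to hmaps _
      have hQpart : ∑ k ∈ Finset.range (n+1),
          ∑ t ∈ (Finset.Icc 1 T).filter (fun t => lvl t = k), (u t * hhat t)
            = ∑ t ∈ Finset.Icc 1 T, u t * hhat t :=
        Finset.sum_fiberwise_of_maps_to hmaps _
      have hWnn : 0 ≤ ∑ t ∈ Finset.Icc 1 T, Real.sqrt (z t * hhat t) :=
        Finset.sum_nonneg fun t _ => Real.sqrt_nonneg _
      have hQnn : 0 ≤ ∑ t ∈ Finset.Icc 1 T, u t * hhat t :=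
        Finset.sum_nonneg fun t ht => mul_nonneg (hu t ht) (hhatpos t ht).le
      have hSknn : ∀ k, 0 ≤ ∑ t ∈ (Finset.Icc 1 T).filter (fun t => lvl t = k),
          Real.sqrt (z t * hhat t) :=
        fun k => Finset.sum_nonneg fun t _ => Real.sqrt_nonneg _
      have hQknn : ∀ k, 0 ≤ ∑ t ∈ (Finset.Icc 1 T).filter (fun t => lvl t = k),
          (u t * hhat t) :=
        fun k => Finset.sum_nonneg fun t ht =>
          mul_nonneg (hu t (Finset.filter_subset _ _ ht)) (hhatpos t (Finset.filter_subset _ _ ht)).le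
      have hSSleW : ∑ k ∈ Finset.range n,
          (∑ t ∈ (Finset.Icc 1 T).filter (fun t => lvl t = k), Real.sqrt (z t * hhat t))
            ≤ ∑ t ∈ Finset.Icc 1 T, Real.sqrt (z t * hhat t) := by
        rw [← hWpart, Finset.sum_range_succ]
        have := hSknn n
        linarith
      have hQQleQ : ∑ k ∈ Finset.range n,
          (∑ t ∈ (Finset.Icc 1 T).filter (fun t => lvl t = k), (u t * hhat t))
            ≤ ∑ t ∈ Finset.Icc 1 T, u t * hhat t := by
        rw [← hQpart, Finset.sum_range_succ]
        have := hQknn n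
        linarith
      have hcard : ∀ k, (((Finset.Icc 1 T).filter (fun t => lvl t = k)).card : ℝ) ≤ (T:ℝ) := by
        intro k
        have h1 : ((Finset.Icc 1 T).filter (fun t => lvl t = k)).card ≤ (Finset.Icc 1 T).card :=
          Finset.card_filter_le _ _
        rw [Nat.card_Icc, Nat.add_sub_cancel] at h1
        exact_mod_cast h1
      constructor
      · -- X part (log bound)
        have hZk : ∀ k, k < n →
            (∑ t ∈ (Finset.Icc 1 T).filter (fun t => lvl t = k), 2 * Real.sqrt (z t / β t))
              ≤ 3 * ((2:ℝ) ^ ((1:ℝ)/3) *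
                (∑ t ∈ (Finset.Icc 1 T).filter (fun t => lvl t = k),
                  Real.sqrt (z t * hhat t)) ^ ((2:ℝ)/3)) := by
          intro k hk
          have hb := aux_zsum_bucket hz hu hhatpos hβ hβ0 rule _ (Finset.filter_subset _ _)
            (Hm / 2^k) (by positivity) (hupperk k)
          refine le_trans hb ?_
          have hinner : (∑ t ∈ (Finset.Icc 1 T).filter (fun t => lvl t = k),
              Real.sqrt (z t * (Hm/2^k)))
                ≤ Real.sqrt 2 * ∑ t ∈ (Finset.Icc 1 T).filter (fun t => lvl t = k),
                  Real.sqrt (z t * hhat t) := by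
            rw [Finset.mul_sum]
            apply Finset.sum_le_sum
            intro t ht
            have htI : t ∈ Finset.Icc 1 T := Finset.filter_subset _ _ ht
            have h1 : z t * (Hm/2^k) ≤ z t * (2 * hhat t) :=
              mul_le_mul_of_nonneg_left (hlowk k hk t ht) (hz t htI)
            calc Real.sqrt (z t * (Hm/2^k)) ≤ Real.sqrt (z t * (2 * hhat t)) :=
                Real.sqrt_le_sqrt h1
            _ = Real.sqrt 2 * Real.sqrt (z t * hhat t) := by
                rw [show z t * (2 * hhat t) = 2 * (z t * hhat t) by ring,
                  Real.sqrt_mul (by norm_num : (0:ℝ) ≤ 2)]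
          have houter := Real.rpow_le_rpow
            (Finset.sum_nonneg fun t _ => Real.sqrt_nonneg _) hinner
            (by norm_num : (0:ℝ) ≤ 2/3)
          rw [Real.mul_rpow (Real.sqrt_nonneg 2) (hSknn k),
            aux_sqrt_rpow23 (by norm_num : (0:ℝ) ≤ 2)] at houter
          linarith
        have hsum_z : ∑ k ∈ Finset.range n,
            (∑ t ∈ (Finset.Icc 1 T).filter (fun t => lvl t = k), 2 * Real.sqrt (z t / β t))
              ≤ 3 * (2:ℝ) ^ ((1:ℝ)/3) * ∑ k ∈ Finset.range n,
                (∑ t ∈ (Finset.Icc 1 T).filter (fun t => lvl t = k),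
                  Real.sqrt (z t * hhat t)) ^ ((2:ℝ)/3) := by
          rw [Finset.mul_sum]
          apply Finset.sum_le_sum
          intro k hk
          have h0 := hZk k (Finset.mem_range.mp hk)
          linarith
        have hpm := aux_powermean (Finset.range n)
          (fun k => ∑ t ∈ (Finset.Icc 1 T).filter (fun t => lvl t = k),
            Real.sqrt (z t * hhat t))
          (fun k _ => hSknn k)
        rw [Finset.card_range] at hpm
        have hss23 : (∑ k ∈ Finset.range n,
            (∑ t ∈ (Finset.Icc 1 T).filter (fun t => lvl t = k),
              Real.sqrt (z t * hhat t))) ^ ((2:ℝ)/3)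
              ≤ (∑ t ∈ Finset.Icc 1 T, Real.sqrt (z t * hhat t)) ^ ((2:ℝ)/3) :=
          Real.rpow_le_rpow (Finset.sum_nonneg fun k _ => hSknn k) hSSleW (by norm_num)
        have hcoef : (2:ℝ)^((1:ℝ)/3) * (n:ℝ)^((1:ℝ)/3)
            ≤ 2 * (Real.log (ε*T))^((1:ℝ)/3) := by
          have h1 : (2:ℝ)^((1:ℝ)/3) * (n:ℝ)^((1:ℝ)/3) = (2*(n:ℝ))^((1:ℝ)/3) :=
            (Real.mul_rpow (by norm_num) (Nat.cast_nonneg n)).symm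
          have h2 : (2*(n:ℝ)) ≤ 8 * Real.log (ε*T) := by linarith
          have h3 : ((2*(n:ℝ)))^((1:ℝ)/3) ≤ (8*Real.log (ε*T))^((1:ℝ)/3) :=
            Real.rpow_le_rpow (by positivity) h2 (by norm_num)
          have h4 : (8*Real.log (ε*T))^((1:ℝ)/3) = 2 * (Real.log (ε*T))^((1:ℝ)/3) := by
            rw [Real.mul_rpow (by norm_num) hLnn, aux_eight_rpow]
          rw [h1]
          rw [h4] at h3
          exact h3
        have hmain : ∑ k ∈ Finset.range n,
            (∑ t ∈ (Finset.Icc 1 T).filter (fun t => lvl t = k), 2 * Real.sqrt (z t / β t))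
              ≤ 6 * ((Real.log (ε*T))^((1:ℝ)/3) *
                (∑ t ∈ Finset.Icc 1 T, Real.sqrt (z t * hhat t)) ^ ((2:ℝ)/3)) := by
          have hW23nn : (0:ℝ) ≤ (∑ t ∈ Finset.Icc 1 T,
              Real.sqrt (z t * hhat t)) ^ ((2:ℝ)/3) := Real.rpow_nonneg hWnn _
          have hc1 : ∑ k ∈ Finset.range n,
              (∑ t ∈ (Finset.Icc 1 T).filter (fun t => lvl t = k),
                Real.sqrt (z t * hhat t)) ^ ((2:ℝ)/3)
                ≤ (n:ℝ)^((1:ℝ)/3) *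
                  (∑ t ∈ Finset.Icc 1 T, Real.sqrt (z t * hhat t)) ^ ((2:ℝ)/3) := by
            refine le_trans hpm ?_
            exact mul_le_mul_of_nonneg_left hss23 (Real.rpow_nonneg (Nat.cast_nonneg n) _)
          have hc2 : 3 * (2:ℝ) ^ ((1:ℝ)/3) * ((n:ℝ)^((1:ℝ)/3) *
              (∑ t ∈ Finset.Icc 1 T, Real.sqrt (z t * hhat t)) ^ ((2:ℝ)/3))
                ≤ 6 * ((Real.log (ε*T))^((1:ℝ)/3) *
                  (∑ t ∈ Finset.Icc 1 T, Real.sqrt (z t * hhat t)) ^ ((2:ℝ)/3)) := by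
            have h5 : (2:ℝ)^((1:ℝ)/3) * (n:ℝ)^((1:ℝ)/3) *
                (∑ t ∈ Finset.Icc 1 T, Real.sqrt (z t * hhat t)) ^ ((2:ℝ)/3)
                  ≤ 2 * (Real.log (ε*T))^((1:ℝ)/3) *
                    (∑ t ∈ Finset.Icc 1 T, Real.sqrt (z t * hhat t)) ^ ((2:ℝ)/3) :=
              mul_le_mul_of_nonneg_right hcoef hW23nn
            linarith [h5]
          calc ∑ k ∈ Finset.range n,
              (∑ t ∈ (Finset.Icc 1 T).filter (fun t => lvl t = k), 2 * Real.sqrt (z t / β t))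
              ≤ 3 * (2:ℝ) ^ ((1:ℝ)/3) * ∑ k ∈ Finset.range n,
                (∑ t ∈ (Finset.Icc 1 T).filter (fun t => lvl t = k),
                  Real.sqrt (z t * hhat t)) ^ ((2:ℝ)/3) := hsum_z
          _ ≤ 3 * (2:ℝ) ^ ((1:ℝ)/3) * ((n:ℝ)^((1:ℝ)/3) *
                (∑ t ∈ Finset.Icc 1 T, Real.sqrt (z t * hhat t)) ^ ((2:ℝ)/3)) := by
              apply mul_le_mul_of_nonneg_left hc1 (by positivity)
          _ ≤ 6 * ((Real.log (ε*T))^((1:ℝ)/3) *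
                (∑ t ∈ Finset.Icc 1 T, Real.sqrt (z t * hhat t)) ^ ((2:ℝ)/3)) := hc2
        have hdeep : (∑ t ∈ (Finset.Icc 1 T).filter (fun t => lvl t = n),
            2 * Real.sqrt (z t / β t)) ≤ 3 * (Real.sqrt (Zm*Hm)/ε) ^ ((2:ℝ)/3) := by
          have hb := aux_zsum_bucket hz hu hhatpos hβ hβ0 rule _ (Finset.filter_subset _ _)
            (Hm / 2^n) (by positivity) (hupperk n)
          refine le_trans hb ?_
          have hinner : (∑ t ∈ (Finset.Icc 1 T).filter (fun t => lvl t = n),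
              Real.sqrt (z t * (Hm/2^n))) ≤ Real.sqrt (Zm*Hm)/ε := by
            have hterm : ∀ t ∈ (Finset.Icc 1 T).filter (fun t => lvl t = n),
                Real.sqrt (z t * (Hm/2^n)) ≤ Real.sqrt (Zm*Hm)/Real.sqrt ((2:ℝ)^n) := by
              intro t ht
              have htI : t ∈ Finset.Icc 1 T := Finset.filter_subset _ _ ht
              have h1 : z t * (Hm/2^n) ≤ (Zm*Hm)/2^n := by
                have h0 : z t * Hm ≤ Zm * Hm :=
                  mul_le_mul_of_nonneg_right (hzZm t htI) hHmpos.le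
                have h2 : z t * (Hm/2^n) = (z t * Hm)/2^n := by ring
                rw [h2]
                exact (div_le_div_iff_of_pos_right (by positivity : (0:ℝ) < (2:ℝ)^n)).mpr h0
              calc Real.sqrt (z t * (Hm/2^n)) ≤ Real.sqrt ((Zm*Hm)/2^n) :=
                  Real.sqrt_le_sqrt h1
              _ = Real.sqrt (Zm*Hm)/Real.sqrt ((2:ℝ)^n) :=
                  Real.sqrt_div (mul_nonneg hZnn hHmpos.le) _
            have hsum := Finset.sum_le_card_nsmul _ _ _ hterm
            rw [nsmul_eq_mul] at hsum
            have hTdiv : (T:ℝ)/Real.sqrt ((2:ℝ)^n) ≤ 1/ε := by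
              rw [div_le_div_iff₀ (by positivity) hεpos]
              linarith [hsqrt2n]
            have hbnd : (((Finset.Icc 1 T).filter (fun t => lvl t = n)).card : ℝ) *
                (Real.sqrt (Zm*Hm)/Real.sqrt ((2:ℝ)^n))
                  ≤ (T:ℝ) * (Real.sqrt (Zm*Hm)/Real.sqrt ((2:ℝ)^n)) :=
              mul_le_mul_of_nonneg_right (hcard n) (by positivity)
            have hfin2 : (T:ℝ) * (Real.sqrt (Zm*Hm)/Real.sqrt ((2:ℝ)^n))
                ≤ Real.sqrt (Zm*Hm)/ε := by
              calc (T:ℝ) * (Real.sqrt (Zm*Hm)/Real.sqrt ((2:ℝ)^n))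
                  = Real.sqrt (Zm*Hm) * ((T:ℝ)/Real.sqrt ((2:ℝ)^n)) := by ring
              _ ≤ Real.sqrt (Zm*Hm) * (1/ε) :=
                  mul_le_mul_of_nonneg_left hTdiv (Real.sqrt_nonneg _)
              _ = Real.sqrt (Zm*Hm)/ε := by ring
            linarith
          have houter := Real.rpow_le_rpow
            (Finset.sum_nonneg fun t _ => Real.sqrt_nonneg _) hinner
            (by norm_num : (0:ℝ) ≤ 2/3)
          linarith
        have ht1eq : (∑ t ∈ Finset.Icc 1 T,
            Real.sqrt (z t * hhat t * Real.log (ε * T))) ^ ((2:ℝ)/3)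
              = (Real.log (ε*T))^((1:ℝ)/3) *
                (∑ t ∈ Finset.Icc 1 T, Real.sqrt (z t * hhat t)) ^ ((2:ℝ)/3) := by
          have h1 : ∑ t ∈ Finset.Icc 1 T, Real.sqrt (z t * hhat t * Real.log (ε * T))
              = (∑ t ∈ Finset.Icc 1 T, Real.sqrt (z t * hhat t)) *
                Real.sqrt (Real.log (ε*T)) := by
            rw [Finset.sum_mul]
            exact Finset.sum_congr rfl fun t ht => by
              rw [Real.sqrt_mul (mul_nonneg (hz t ht) (hhatpos t ht).le)]
          rw [h1, Real.mul_rpow hWnn (Real.sqrt_nonneg _), aux_sqrt_rpow23 hLnn, mul_comm]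
        rw [hXdef, ← hXpart, Finset.sum_range_succ, hA1def, ht1eq]
        linarith
      · -- Y part (log bound)
        have hUk : ∀ k, k < n →
            (∑ t ∈ (Finset.Icc 1 T).filter (fun t => lvl t = k), u t / β t)
              ≤ 2 * (Real.sqrt 2 * Real.sqrt (∑ t ∈ (Finset.Icc 1 T).filter
                (fun t => lvl t = k), (u t * hhat t))) := by
          intro k hk
          have hb := aux_usum_bucket hz hu hhatpos hβ hβ0 rule _ (Finset.filter_subset _ _)
            (Hm / 2^k) (by positivity) (hupperk k)
          refine le_trans hb ?_
          have hinner : (∑ t ∈ (Finset.Icc 1 T).filter (fun t => lvl t = k),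
              u t * (Hm/2^k)) ≤ 2 * ∑ t ∈ (Finset.Icc 1 T).filter (fun t => lvl t = k),
                (u t * hhat t) := by
            rw [Finset.mul_sum]
            apply Finset.sum_le_sum
            intro t ht
            have htI : t ∈ Finset.Icc 1 T := Finset.filter_subset _ _ ht
            have h1 : u t * (Hm/2^k) ≤ u t * (2 * hhat t) :=
              mul_le_mul_of_nonneg_left (hlowk k hk t ht) (hu t htI)
            linarith [h1]
          have h2 := Real.sqrt_le_sqrt hinner
          rw [Real.sqrt_mul (by norm_num : (0:ℝ) ≤ 2)] at h2
          linarith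
        have hsum_u : ∑ k ∈ Finset.range n,
            (∑ t ∈ (Finset.Icc 1 T).filter (fun t => lvl t = k), u t / β t)
              ≤ 2 * Real.sqrt 2 * ∑ k ∈ Finset.range n,
                Real.sqrt (∑ t ∈ (Finset.Icc 1 T).filter (fun t => lvl t = k),
                  (u t * hhat t)) := by
          rw [Finset.mul_sum]
          apply Finset.sum_le_sum
          intro k hk
          have h0 := hUk k (Finset.mem_range.mp hk)
          linarith
        have hcs := aux_sqrtsum (Finset.range n)
          (fun k => ∑ t ∈ (Finset.Icc 1 T).filter (fun t => lvl t = k), (u t * hhat t))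
          (fun k _ => hQknn k)
        rw [Finset.card_range] at hcs
        have hnq : (n:ℝ) * (∑ k ∈ Finset.range n,
            (∑ t ∈ (Finset.Icc 1 T).filter (fun t => lvl t = k), (u t * hhat t)))
              ≤ 4 * (Real.log (ε*T) * ∑ t ∈ Finset.Icc 1 T, u t * hhat t) := by
          have h1 : (n:ℝ) * (∑ k ∈ Finset.range n,
              (∑ t ∈ (Finset.Icc 1 T).filter (fun t => lvl t = k), (u t * hhat t)))
                ≤ (4 * Real.log (ε*T)) * (∑ t ∈ Finset.Icc 1 T, u t * hhat t) := by
            apply mul_le_mul hn4L hQQleQ (Finset.sum_nonneg fun k _ => hQknn k) (by positivity)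
          linarith [h1]
        have hsq4 : Real.sqrt ((n:ℝ) * (∑ k ∈ Finset.range n,
            (∑ t ∈ (Finset.Icc 1 T).filter (fun t => lvl t = k), (u t * hhat t))))
              ≤ 2 * Real.sqrt (Real.log (ε*T) * ∑ t ∈ Finset.Icc 1 T, u t * hhat t) := by
          have h1 := Real.sqrt_le_sqrt hnq
          have h2 : Real.sqrt (4 * (Real.log (ε*T) * ∑ t ∈ Finset.Icc 1 T, u t * hhat t))
              = 2 * Real.sqrt (Real.log (ε*T) * ∑ t ∈ Finset.Icc 1 T, u t * hhat t) := by
            rw [show (4:ℝ) = 2^2 by norm_num,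
              Real.sqrt_mul (by norm_num : (0:ℝ) ≤ 2^2),
              Real.sqrt_sq (by norm_num : (0:ℝ) ≤ 2)]
          rw [h2] at h1
          exact h1
        have hs2 : Real.sqrt 2 ≤ 3/2 := by
          have h4 : Real.sqrt 2 ≤ Real.sqrt ((3/2)^2) :=
            Real.sqrt_le_sqrt (by norm_num)
          rwa [Real.sqrt_sq (by norm_num : (0:ℝ) ≤ 3/2)] at h4
        have hmain : ∑ k ∈ Finset.range n,
            (∑ t ∈ (Finset.Icc 1 T).filter (fun t => lvl t = k), u t / β t)
              ≤ 6 * Real.sqrt (Real.log (ε*T) * ∑ t ∈ Finset.Icc 1 T, u t * hhat t) := by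
          have hsnn : 0 ≤ Real.sqrt (Real.log (ε*T) * ∑ t ∈ Finset.Icc 1 T, u t * hhat t) :=
            Real.sqrt_nonneg _
          have h1 : ∑ k ∈ Finset.range n,
              Real.sqrt (∑ t ∈ (Finset.Icc 1 T).filter (fun t => lvl t = k), (u t * hhat t))
                ≤ 2 * Real.sqrt (Real.log (ε*T) * ∑ t ∈ Finset.Icc 1 T, u t * hhat t) :=
            le_trans hcs hsq4
          have h2 : (0:ℝ) ≤ ∑ k ∈ Finset.range n,
              Real.sqrt (∑ t ∈ (Finset.Icc 1 T).filter (fun t => lvl t = k), (u t * hhat t)) :=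
            Finset.sum_nonneg fun k _ => Real.sqrt_nonneg _
          have hA : 2 * Real.sqrt 2 ≤ 3 := by linarith [hs2]
          have hB := mul_le_mul_of_nonneg_right hA h2
          linarith [hsum_u, hB, h1]
        have hdeep : (∑ t ∈ (Finset.Icc 1 T).filter (fun t => lvl t = n), u t / β t)
            ≤ 2 * Real.sqrt (Um * Hm / ε) := by
          have hb := aux_usum_bucket hz hu hhatpos hβ hβ0 rule _ (Finset.filter_subset _ _)
            (Hm / 2^n) (by positivity) (hupperk n)
          refine le_trans hb ?_
          have hinner : (∑ t ∈ (Finset.Icc 1 T).filter (fun t => lvl t = n),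
              u t * (Hm/2^n)) ≤ Um * Hm / ε := by
            have hterm : ∀ t ∈ (Finset.Icc 1 T).filter (fun t => lvl t = n),
                u t * (Hm/2^n) ≤ Um * (Hm/2^n) := by
              intro t ht
              exact mul_le_mul_of_nonneg_right (huUm t (Finset.filter_subset _ _ ht))
                (by positivity)
            have hsum := Finset.sum_le_card_nsmul _ _ _ hterm
            rw [nsmul_eq_mul] at hsum
            have hbnd : (((Finset.Icc 1 T).filter (fun t => lvl t = n)).card : ℝ) *
                (Um * (Hm/2^n)) ≤ (T:ℝ) * (Um * (Hm/2^n)) :=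
              mul_le_mul_of_nonneg_right (hcard n) (by positivity)
            have hself : ε * (T:ℝ) ≤ (ε * (T:ℝ))^2 := by
              calc ε*(T:ℝ) = (ε*(T:ℝ))*1 := by ring
              _ ≤ (ε*(T:ℝ))*(ε*(T:ℝ)) := mul_le_mul_of_nonneg_left hεT (by positivity)
              _ = (ε*(T:ℝ))^2 := by ring
            have h2nT : ε * (T:ℝ) ≤ (2:ℝ)^n := le_trans hself h2n
            have hfin2 : (T:ℝ) * (Um * (Hm/2^n)) ≤ Um * Hm / ε := by
              have hTdiv : (T:ℝ)/(2:ℝ)^n ≤ 1/ε := by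
                rw [div_le_div_iff₀ (by positivity) hεpos]
                linarith [h2nT]
              calc (T:ℝ) * (Um * (Hm/2^n)) = (Um * Hm) * ((T:ℝ)/(2:ℝ)^n) := by ring
              _ ≤ (Um * Hm) * (1/ε) :=
                  mul_le_mul_of_nonneg_left hTdiv (by positivity)
              _ = Um * Hm / ε := by ring
            linarith
          have h2 := Real.sqrt_le_sqrt hinner
          linarith
        have ht1eq : Real.sqrt (∑ t ∈ Finset.Icc 1 T, u t * hhat t * Real.log (ε * T))
            = Real.sqrt (Real.log (ε*T) * ∑ t ∈ Finset.Icc 1 T, u t * hhat t) := by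
          congr 1
          rw [← Finset.sum_mul, mul_comm]
        rw [hYdef, ← hYpart, Finset.sum_range_succ, hB1def, ht1eq]
        linarith
  obtain ⟨hX1, hY1⟩ := hlog
  -- final assembly
  have hXmin : X ≤ 6 * min A1 A2 := by
    rcases min_cases A1 A2 with ⟨he, -⟩ | ⟨he, -⟩ <;> rw [he] <;> linarith
  have hYmin : Y ≤ 6 * min B1 B2 := by
    rcases min_cases B1 B2 with ⟨he, -⟩ | ⟨he, -⟩ <;> rw [he] <;> linarith
  calc F T β z u h ≤ 2 * X + 2 * Y := hF
  _ ≤ 2 * (6 * min A1 A2) + 2 * (6 * min B1 B2) := by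
      have h1 := mul_le_mul_of_nonneg_left hXmin (by norm_num : (0:ℝ) ≤ 2)
      have h2 := mul_le_mul_of_nonneg_left hYmin (by norm_num : (0:ℝ) ≤ 2)
      linarith
  _ = 12 * (min A1 A2 + min B1 B2) := by ring
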